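/- Let G be a connected graph, let (X⁺,X⁻) be disjoint vertex sets, let c be a vertex and r an integer with X⁺ ⊆ B_G(c,r) and X⁻ ∩ B_G(c,r) = ∅. Let (A₁,A₂) be a separation of G with c ∈ A₁ and X⁺ ∪ X⁻ ⊆ A₂, and let S = A₁ ∩ A₂. For v ∈ S define r⁺(v) = max{dist_G(v,x) : x ∈ (X⁺∪X⁻) ∩ B_G(v, r - dist_G(c,v))} and r⁻(v) = min{dist_G(v,x) : x ∈ X⁻}. Suppose c' ∈ A₁ and s is an integer such that A₂ ∩ ⋃_{v∈S} B_G(v, r⁺(v)) ⊆ A₂ ∩ B_G(c',s) ⊆ A₂ ∩ ⋃_{v∈S} B_G(v, r⁻(v)-1). Then X⁺ ⊆ B_G(c',s) and X⁻ ∩ B_G(c',s) = ∅. -/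
import Mathlib

lemma cross_sep {V : Type*} (G : SimpleGraph V) (A₁ A₂ : Set V)
    (hcover : A₁ ∪ A₂ = Set.univ)
    (hsep : ∀ a b, a ∈ A₁ \ A₂ → b ∈ A₂ \ A₁ → ¬ G.Adj a b) :
    ∀ {a b : V} (p : G.Walk a b), a ∈ A₁ → b ∈ A₂ →
      ∃ v ∈ A₁ ∩ A₂, G.dist a v + G.dist v b ≤ p.length := by
  suffices h : ∀ {a b : V} (p : G.Walk a b), a ∈ A₁ → b ∈ A₂ →
      ∃ v, v ∈ A₁ ∩ A₂ ∧ ∃ (p1 : G.Walk a v) (p2 : G.Walk v b),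
        p1.length + p2.length ≤ p.length by
    intro a b p ha hb
    obtain ⟨v, hv, p1, p2, hl⟩ := h p ha hb
    exact ⟨v, hv, le_trans (add_le_add (SimpleGraph.dist_le p1) (SimpleGraph.dist_le p2)) hl⟩
  intro a b p
  induction p with
  | nil =>
    intro ha hb
    exact ⟨_, ⟨ha, hb⟩, .nil, .nil, by simp⟩
  | @cons a a' b hadj q ih =>
    intro ha hb
    by_cases ha2 : a ∈ A₂
    · exact ⟨a, ⟨ha, ha2⟩, .nil, .cons hadj q, by simp⟩
    · have ha'1 : a' ∈ A₁ := by
        by_contra ha'1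
        have ha'2 : a' ∈ A₂ := by
          have := Set.mem_univ a'
          rw [← hcover] at this
          exact this.resolve_left ha'1
        exact hsep a a' ⟨ha, ha2⟩ ⟨ha'2, ha'1⟩ hadj
      obtain ⟨v, hv, p1, p2, hl⟩ := ih ha'1 hb
      exact ⟨v, hv, .cons hadj p1, p2, by simp only [SimpleGraph.Walk.length_cons]; omega⟩

theorem stmt9 {V : Type*} [Fintype V] (G : SimpleGraph V) (hG : G.Connected)
    (Xp Xm : Set V) (hdisj : Disjoint Xp Xm)
    (c : V) (r : ℤ)
    (hp : ∀ x ∈ Xp, (G.dist c x : ℤ) ≤ r)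
    (hm : ∀ x ∈ Xm, ¬ ((G.dist c x : ℤ) ≤ r))
    (A₁ A₂ : Set V) (hcover : A₁ ∪ A₂ = Set.univ)
    (hsep : ∀ a b, a ∈ A₁ \ A₂ → b ∈ A₂ \ A₁ → ¬ G.Adj a b)
    (hc : c ∈ A₁) (hX : Xp ∪ Xm ⊆ A₂)
    (c' : V) (s : ℤ) (hc' : c' ∈ A₁)
    -- `A₂ ∩ ⋃_{v ∈ S} B(v, r⁺(v)) ⊆ A₂ ∩ B(c', s)` where
    -- `B(v, r⁺(v)) = {u | ∃ x ∈ X ∩ B(v, r - dist(c,v)), dist(v,u) ≤ dist(v,x)}`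
    (hlow : A₂ ∩ {u | ∃ v ∈ A₁ ∩ A₂, ∃ x ∈ Xp ∪ Xm,
        (G.dist v x : ℤ) ≤ r - G.dist c v ∧ G.dist v u ≤ G.dist v x}
        ⊆ A₂ ∩ {u | (G.dist c' u : ℤ) ≤ s})
    -- `A₂ ∩ B(c', s) ⊆ A₂ ∩ ⋃_{v ∈ S} B(v, r⁻(v) - 1)` where
    -- `B(v, r⁻(v) - 1) = {u | ∀ x ∈ X⁻, dist(v,u) < dist(v,x)}`
    (hup : A₂ ∩ {u | (G.dist c' u : ℤ) ≤ s}
        ⊆ A₂ ∩ {u | ∃ v ∈ A₁ ∩ A₂, ∀ x ∈ Xm, G.dist v u < G.dist v x}) :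
    Xp ⊆ {u | (G.dist c' u : ℤ) ≤ s} ∧ Xm ∩ {u | (G.dist c' u : ℤ) ≤ s} = ∅ := by
  constructor
  · intro x hx
    have hxA2 : x ∈ A₂ := hX (Or.inl hx)
    obtain ⟨p, hp'⟩ := hG.exists_walk_length_eq_dist c x
    obtain ⟨v, hv, hle⟩ := cross_sep G A₁ A₂ hcover hsep p hc hxA2
    rw [hp'] at hle
    have hcx := hp x hx
    have : x ∈ A₂ ∩ {u | ∃ v ∈ A₁ ∩ A₂, ∃ x' ∈ Xp ∪ Xm,
        (G.dist v x' : ℤ) ≤ r - G.dist c v ∧ G.dist v u ≤ G.dist v x'} := by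
      refine ⟨hxA2, v, hv, x, Or.inl hx, ?_, le_refl _⟩
      push_cast
      omega
    exact (hlow this).2
  · ext x
    simp only [Set.mem_inter_iff, Set.mem_setOf_eq, Set.mem_empty_iff_false, iff_false, not_and]
    intro hxm hs
    have hxA2 : x ∈ A₂ := hX (Or.inr hxm)
    obtain ⟨-, v, -, hv⟩ := hup ⟨hxA2, hs⟩
    exact lt_irrefl _ (hv x hxm)
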